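/- Let P, Q be positive semidefinite d×d matrices and X a d×d matrix. The block matrix [[P, X],[X*, Q]] is positive semidefinite if and only if X = P^{1/2} U Q^{1/2} for some contraction U with ‖U‖ ≤ 1. -/

import Mathlib

open Matrix BigOperators Finset ComplexOrder

variable {d n : ℕ}

open Classical in
/-- The positive semidefinite square root (zero if not PSD). -/
noncomputable def psqrt (A : Matrix (Fin d) (Fin d) ℂ) : Matrix (Fin d) (Fin d) ℂ :=
  if h : A.PosSemidef then (open scoped MatrixOrder Matrix.Norms.L2Operator in CFC.sqrt A) else 0

/-- Trace norm ‖A‖₁ = Tr √(A*A). -/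
noncomputable def traceNorm (A : Matrix (Fin d) (Fin d) ℂ) : ℝ :=
  ((psqrt (Aᴴ * A)).trace).re

/-- Fidelity F(ρ,σ) = Tr √(σ^{1/2} ρ σ^{1/2}). -/
noncomputable def fid (ρ σ : Matrix (Fin d) (Fin d) ℂ) : ℝ :=
  ((psqrt (psqrt σ * ρ * psqrt σ)).trace).re

/-- Density matrix: positive semidefinite with unit trace. -/
def IsDensity (ρ : Matrix (Fin d) (Fin d) ℂ) : Prop := ρ.PosSemidef ∧ ρ.trace = 1

/-- Contraction: spectral norm at most one, i.e. 1 - UᴴU ⪰ 0. -/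
def IsContraction (U : Matrix (Fin d) (Fin d) ℂ) : Prop := (1 - Uᴴ * U).PosSemidef

/-- Probability vector. -/
def IsProbVec (p : Fin n → ℝ) : Prop := (∀ i, 0 ≤ p i) ∧ ∑ i, p i = 1

/-- Apply a real function to a PSD matrix via its spectral decomposition. -/
noncomputable def hermFun {A : Matrix (Fin d) (Fin d) ℂ} (hA : A.PosSemidef) (f : ℝ → ℝ) :
    Matrix (Fin d) (Fin d) ℂ :=
  (hA.1.eigenvectorUnitary : Matrix (Fin d) (Fin d) ℂ) *
    Matrix.diagonal (fun i => ((f (hA.1.eigenvalues i) : ℝ) : ℂ)) *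
    (star hA.1.eigenvectorUnitary : Matrix (Fin d) (Fin d) ℂ)

lemma hermFun_mul {A : Matrix (Fin d) (Fin d) ℂ} (hA : A.PosSemidef) (f g h : ℝ → ℝ)
    (hfg : ∀ i, f (hA.1.eigenvalues i) * g (hA.1.eigenvalues i) = h (hA.1.eigenvalues i)) :
    hermFun hA f * hermFun hA g = hermFun hA h := by
  unfold hermFun
  set C : Matrix (Fin d) (Fin d) ℂ := (hA.1.eigenvectorUnitary : Matrix (Fin d) (Fin d) ℂ) with hC
  set Df : Matrix (Fin d) (Fin d) ℂ := Matrix.diagonal (fun i => ((f (hA.1.eigenvalues i) : ℝ) : ℂ))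
  set Dg : Matrix (Fin d) (Fin d) ℂ := Matrix.diagonal (fun i => ((g (hA.1.eigenvalues i) : ℝ) : ℂ))
  have hu : star C * C = 1 := (Matrix.mem_unitaryGroup_iff').mp (hA.1.eigenvectorUnitary).2
  have key : (C * Df * star C) * (C * Dg * star C) = C * (Df * (star C * C) * Dg) * star C := by
    noncomm_ring
  rw [key, hu, mul_one, Matrix.diagonal_mul_diagonal]
  have hd : (fun i => ((f (hA.1.eigenvalues i) : ℝ) : ℂ) * ((g (hA.1.eigenvalues i) : ℝ) : ℂ))
      = fun i => ((h (hA.1.eigenvalues i) : ℝ) : ℂ) := by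
    funext i; push_cast [← hfg i]; ring
  rw [hd]

lemma hermFun_conjTranspose {A : Matrix (Fin d) (Fin d) ℂ} (hA : A.PosSemidef) (f : ℝ → ℝ) :
    (hermFun hA f)ᴴ = hermFun hA f := by
  unfold hermFun
  simp [conjTranspose_mul, diagonal_conjTranspose, mul_assoc]
  congr 1
  ext i j
  simp [Matrix.diagonal]
  aesop

lemma hermFun_posSemidef {A : Matrix (Fin d) (Fin d) ℂ} (hA : A.PosSemidef) (f : ℝ → ℝ)
    (hf : ∀ i, 0 ≤ f (hA.1.eigenvalues i)) : (hermFun hA f).PosSemidef := by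
  unfold hermFun
  apply Matrix.PosSemidef.mul_mul_conjTranspose_same
  refine Matrix.posSemidef_diagonal_iff.mpr fun i => ?_
  rw [Complex.nonneg_iff]
  simp [hf i]

lemma hermFun_id {A : Matrix (Fin d) (Fin d) ℂ} (hA : A.PosSemidef) :
    hermFun hA (fun x => x) = A := by
  unfold hermFun
  exact hA.1.spectral_theorem.symm

lemma hermFun_one {A : Matrix (Fin d) (Fin d) ℂ} (hA : A.PosSemidef) :
    hermFun hA (fun _ => 1) = 1 := by
  unfold hermFun
  have hu : (hA.1.eigenvectorUnitary : Matrix (Fin d) (Fin d) ℂ) *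
      (star hA.1.eigenvectorUnitary : Matrix (Fin d) (Fin d) ℂ) = 1 :=
    (Matrix.mem_unitaryGroup_iff).mp (hA.1.eigenvectorUnitary).2
  simpa using hu

lemma hermFun_zero {A : Matrix (Fin d) (Fin d) ℂ} (hA : A.PosSemidef) :
    hermFun hA (fun _ => 0) = 0 := by
  unfold hermFun
  simp

lemma hermFun_sqrt {A : Matrix (Fin d) (Fin d) ℂ} (hA : A.PosSemidef) :
    hermFun hA Real.sqrt = hA.1.cfc Real.sqrt := rfl

lemma hermFun_add {A : Matrix (Fin d) (Fin d) ℂ} (hA : A.PosSemidef) (f g h : ℝ → ℝ)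
    (hfg : ∀ i, f (hA.1.eigenvalues i) + g (hA.1.eigenvalues i) = h (hA.1.eigenvalues i)) :
    hermFun hA f + hermFun hA g = hermFun hA h := by
  unfold hermFun
  have hd : Matrix.diagonal (fun i => ((f (hA.1.eigenvalues i) : ℝ) : ℂ))
      + Matrix.diagonal (fun i => ((g (hA.1.eigenvalues i) : ℝ) : ℂ))
      = Matrix.diagonal (fun i => ((h (hA.1.eigenvalues i) : ℝ) : ℂ)) := by
    rw [Matrix.diagonal_add]
    have hfun : (fun i => ((f (hA.1.eigenvalues i) : ℝ) : ℂ) + ((g (hA.1.eigenvalues i) : ℝ) : ℂ))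
        = fun i => ((h (hA.1.eigenvalues i) : ℝ) : ℂ) := by
      funext i; push_cast [← hfg i]; ring
    rw [hfun]
  rw [← hd]
  noncomm_ring

lemma psqrt_eq {A : Matrix (Fin d) (Fin d) ℂ} (hA : A.PosSemidef) :
    psqrt A = hermFun hA Real.sqrt := by
  rw [psqrt, dif_pos hA]
  open scoped MatrixOrder Matrix.Norms.L2Operator in
  rw [CFC.sqrt_eq_real_sqrt A hA.nonneg, cfcₙ_eq_cfc, hA.1.cfc_eq]
  rfl

lemma posSemidef_fromBlocks_diag {A D : Matrix (Fin d) (Fin d) ℂ}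
    (hA : A.PosSemidef) (hD : D.PosSemidef) :
    (Matrix.fromBlocks A 0 0 D).PosSemidef := by
  obtain ⟨B, rfl⟩ : ∃ B : Matrix (Fin d) (Fin d) ℂ, A = Bᴴ * B := by
    open scoped MatrixOrder Matrix.Norms.L2Operator in
    exact CStarAlgebra.nonneg_iff_eq_star_mul_self.mp hA.nonneg
  obtain ⟨C, rfl⟩ : ∃ C : Matrix (Fin d) (Fin d) ℂ, D = Cᴴ * C := by
    open scoped MatrixOrder Matrix.Norms.L2Operator in
    exact CStarAlgebra.nonneg_iff_eq_star_mul_self.mp hD.nonneg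
  have : Matrix.fromBlocks (Bᴴ * B) (0 : Matrix (Fin d) (Fin d) ℂ) 0 (Cᴴ * C)
      = (Matrix.fromBlocks B 0 0 C)ᴴ * (Matrix.fromBlocks B 0 0 C) := by
    rw [Matrix.fromBlocks_conjTranspose, Matrix.fromBlocks_multiply]
    simp
  rw [this]
  exact Matrix.posSemidef_conjTranspose_mul_self _


/-- The block matrix [[P, X],[X*, Q]] is PSD iff X = P^{1/2} U Q^{1/2} for a contraction U. -/
theorem fromBlocks_posSemidef_iff (P Q X : Matrix (Fin d) (Fin d) ℂ)
    (hP : P.PosSemidef) (hQ : Q.PosSemidef) :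
    (Matrix.fromBlocks P X Xᴴ Q).PosSemidef ↔
      ∃ U : Matrix (Fin d) (Fin d) ℂ, IsContraction U ∧ X = psqrt P * U * psqrt Q := by
  classical
  haveI : Invertible (1 : Matrix (Fin d) (Fin d) ℂ) := invertibleOne
  set g : ℝ → ℝ := fun x => if x = 0 then 0 else (Real.sqrt x)⁻¹ with hg
  set ind : ℝ → ℝ := fun x => if x = 0 then 0 else 1 with hind
  set r : ℝ → ℝ := fun x => 1 - ind x with hr
  -- pointwise identities on nonnegative reals
  have keyP : ∀ (x : ℝ), 0 ≤ x → Real.sqrt x * g x = ind x := by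
    intro x hx
    by_cases h : x = 0 <;> simp [hg, hind, h]
    exact mul_inv_cancel₀ (Real.sqrt_ne_zero'.mpr (lt_of_le_of_ne hx (Ne.symm h)))
  have keyP2 : ∀ (x : ℝ), 0 ≤ x → g x * Real.sqrt x = ind x := by
    intro x hx; rw [mul_comm]; exact keyP x hx
  have keyGI : ∀ (x : ℝ), 0 ≤ x → g x * x = Real.sqrt x * ind x := by
    intro x hx
    by_cases h : x = 0 <;> simp [hg, hind, h]
    rw [inv_mul_eq_div, div_eq_iff (Real.sqrt_ne_zero'.mpr (lt_of_le_of_ne hx (Ne.symm h)))]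
    exact (Real.mul_self_sqrt hx).symm
  have keyIG : ∀ (x : ℝ), 0 ≤ x → Real.sqrt x * ind x * g x = ind x := by
    intro x hx
    by_cases h : x = 0 <;> simp [hg, hind, h]
    exact mul_inv_cancel₀ (Real.sqrt_ne_zero'.mpr (lt_of_le_of_ne hx (Ne.symm h)))
  have keyIdR : ∀ (x : ℝ), x * r x = 0 := by
    intro x; by_cases h : x = 0 <;> simp [hr, hind, h]
  -- matrices
  set pP := hermFun hP g with hpP
  set pQ := hermFun hQ g with hpQ
  set piP := hermFun hP ind with hpiP
  set piQ := hermFun hQ ind with hpiQ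
  set RP := hermFun hP r with hRP
  set RQ := hermFun hQ r with hRQ
  have hPev := hP.eigenvalues_nonneg
  have hQev := hQ.eigenvalues_nonneg
  have hsP : psqrt P = hermFun hP Real.sqrt := psqrt_eq hP
  have hsQ : psqrt Q = hermFun hQ Real.sqrt := psqrt_eq hQ
  -- product identities
  have sPpP : psqrt P * pP = piP := by
    rw [hsP]; exact hermFun_mul hP _ _ _ (fun i => keyP _ (hPev i))
  have pPsP : pP * psqrt P = piP := by
    rw [hsP]; exact hermFun_mul hP _ _ _ (fun i => keyP2 _ (hPev i))
  have sQpQ : psqrt Q * pQ = piQ := by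
    rw [hsQ]; exact hermFun_mul hQ _ _ _ (fun i => keyP _ (hQev i))
  have pQsQ : pQ * psqrt Q = piQ := by
    rw [hsQ]; exact hermFun_mul hQ _ _ _ (fun i => keyP2 _ (hQev i))
  have pPP : pP * P * pP = piP := by
    have h1 : pP * P = hermFun hP (fun x => Real.sqrt x * ind x) := by
      have := hermFun_mul hP g (fun x => x) (fun x => Real.sqrt x * ind x)
        (fun i => keyGI _ (hPev i))
      rwa [hermFun_id hP, ← hpP] at this
    rw [h1, hpP]
    exact hermFun_mul hP _ _ _ (fun i => keyIG _ (hPev i))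
  have pQQ : pQ * Q * pQ = piQ := by
    have h1 : pQ * Q = hermFun hQ (fun x => Real.sqrt x * ind x) := by
      have := hermFun_mul hQ g (fun x => x) (fun x => Real.sqrt x * ind x)
        (fun i => keyGI _ (hQev i))
      rwa [hermFun_id hQ, ← hpQ] at this
    rw [h1, hpQ]
    exact hermFun_mul hQ _ _ _ (fun i => keyIG _ (hQev i))
  have RPP : RP * P = 0 := by
    have h1 := hermFun_mul hP r (fun x => x) (fun _ => 0)
      (fun i => by rw [mul_comm]; exact keyIdR _)
    rw [hermFun_id hP, hermFun_zero, ← hRP] at h1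
    exact h1
  have RQQ : RQ * Q = 0 := by
    have h1 := hermFun_mul hQ r (fun x => x) (fun _ => 0)
      (fun i => by rw [mul_comm]; exact keyIdR _)
    rw [hermFun_id hQ, hermFun_zero, ← hRQ] at h1
    exact h1
  have piRP : piP + RP = 1 := by
    rw [hpiP, hRP, ← hermFun_one hP]
    exact hermFun_add hP _ _ _ (fun i => by simp only [hr]; ring)
  have piRQ : piQ + RQ = 1 := by
    rw [hpiQ, hRQ, ← hermFun_one hQ]
    exact hermFun_add hQ _ _ _ (fun i => by simp only [hr]; ring)
  have hpPH : pPᴴ = pP := hermFun_conjTranspose hP g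
  have hpQH : pQᴴ = pQ := hermFun_conjTranspose hQ g
  have hRPH : RPᴴ = RP := hermFun_conjTranspose hP r
  have hRQH : RQᴴ = RQ := hermFun_conjTranspose hQ r
  have hsPH : (psqrt P)ᴴ = psqrt P := by rw [hsP]; exact hermFun_conjTranspose hP _
  have hsQH : (psqrt Q)ᴴ = psqrt Q := by rw [hsQ]; exact hermFun_conjTranspose hQ _
  have hRPpsd : RP.PosSemidef := hermFun_posSemidef hP r
    (fun i => by by_cases h : hP.1.eigenvalues i = 0 <;> simp [hr, hind, h])
  have hRQpsd : RQ.PosSemidef := hermFun_posSemidef hQ r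
    (fun i => by by_cases h : hQ.1.eigenvalues i = 0 <;> simp [hr, hind, h])
  constructor
  · intro h
    -- kernel conditions
    have hXRQ : X * RQ = 0 := by
      ext i j
      set y : Fin d → ℂ := fun k => RQ k j with hy
      have hQy : star y ⬝ᵥ Q *ᵥ y = 0 := by
        have hsy : star y = fun k => RQ j k := by
          funext k
          have : RQ j k = RQᴴ j k := by rw [hRQH]
          rw [this, Matrix.conjTranspose_apply]
          rfl
        have : star y ⬝ᵥ Q *ᵥ y = ((RQ * Q) *ᵥ y) j := by
          rw [hsy, ← Matrix.mulVec_mulVec]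
          simp [Matrix.mulVec, dotProduct]
        rw [this, RQQ]
        simp
      have hv : star (Sum.elim (0 : Fin d → ℂ) y) ⬝ᵥ
          (Matrix.fromBlocks P X Xᴴ Q) *ᵥ (Sum.elim 0 y) = 0 := by
        rw [Matrix.fromBlocks_mulVec]
        have e1 : star (Sum.elim (0 : Fin d → ℂ) y)
            = Sum.elim (0 : Fin d → ℂ) (star y) := by
          funext k; cases k <;> simp
        rw [e1]
        simp [sumElim_dotProduct_sumElim, hQy]
      have hz := (h.dotProduct_mulVec_zero_iff _).mp hv
      rw [Matrix.fromBlocks_mulVec] at hz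
      have := congrFun hz (Sum.inl i)
      simpa [Matrix.mul_apply, Matrix.mulVec, dotProduct, hy] using this
    have hRPX : RP * X = 0 := by
      have hXH : Xᴴ * RP = 0 := by
        ext i j
        set x : Fin d → ℂ := fun k => RP k j with hx
        have hPx : star x ⬝ᵥ P *ᵥ x = 0 := by
          have hsx : star x = fun k => RP j k := by
            funext k
            have : RP j k = RPᴴ j k := by rw [hRPH]
            rw [this, Matrix.conjTranspose_apply]
            rfl
          have : star x ⬝ᵥ P *ᵥ x = ((RP * P) *ᵥ x) j := by
            rw [hsx, ← Matrix.mulVec_mulVec]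
            simp [Matrix.mulVec, dotProduct]
          rw [this, RPP]
          simp
        have hv : star (Sum.elim x (0 : Fin d → ℂ)) ⬝ᵥ
            (Matrix.fromBlocks P X Xᴴ Q) *ᵥ (Sum.elim x 0) = 0 := by
          rw [Matrix.fromBlocks_mulVec]
          have e1 : star (Sum.elim x (0 : Fin d → ℂ))
              = Sum.elim (star x) (0 : Fin d → ℂ) := by
            funext k; cases k <;> simp
          rw [e1]
          simp [sumElim_dotProduct_sumElim, hPx]
        have hz := (h.dotProduct_mulVec_zero_iff _).mp hv
        rw [Matrix.fromBlocks_mulVec] at hz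
        have := congrFun hz (Sum.inr i)
        simpa [Matrix.mul_apply, Matrix.mulVec, dotProduct, hx] using this
      calc RP * X = (Xᴴ * RP)ᴴ := by rw [Matrix.conjTranspose_mul, hRPH,
            Matrix.conjTranspose_conjTranspose]
        _ = 0 := by rw [hXH]; simp
    have hpiPX : piP * X = X := by
      have : (piP + RP) * X = X := by rw [piRP, one_mul]
      rwa [add_mul, hRPX, add_zero] at this
    have hXpiQ : X * piQ = X := by
      have : X * (piQ + RQ) = X := by rw [piRQ, mul_one]
      rwa [mul_add, hXRQ, add_zero] at this
    refine ⟨pP * X * pQ, ?_, ?_⟩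
    · -- contraction
      have hN : ((Matrix.fromBlocks pP 0 0 pQ)ᴴ * (Matrix.fromBlocks P X Xᴴ Q) *
          (Matrix.fromBlocks pP 0 0 pQ)).PosSemidef :=
        h.conjTranspose_mul_mul_same _
      have hCH : (Matrix.fromBlocks pP (0 : Matrix (Fin d) (Fin d) ℂ) 0 pQ)ᴴ
          = Matrix.fromBlocks pP 0 0 pQ := by
        rw [Matrix.fromBlocks_conjTranspose, hpPH, hpQH]
        simp
      rw [hCH, Matrix.fromBlocks_multiply, Matrix.fromBlocks_multiply] at hN
      simp only [Matrix.mul_zero, Matrix.zero_mul, add_zero, zero_add] at hN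
      have hUH : pQ * Xᴴ * pP = (pP * X * pQ)ᴴ := by
        rw [Matrix.conjTranspose_mul, Matrix.conjTranspose_mul, hpPH, hpQH]
        noncomm_ring
      rw [pPP, pQQ, hUH] at hN
      have hsum : Matrix.fromBlocks piP (pP * X * pQ) (pP * X * pQ)ᴴ piQ
          + Matrix.fromBlocks RP 0 0 RQ
          = Matrix.fromBlocks 1 (pP * X * pQ) (pP * X * pQ)ᴴ 1 := by
        rw [Matrix.fromBlocks_add, piRP, piRQ, add_zero, add_zero]
      have hblk : (Matrix.fromBlocks 1 (pP * X * pQ) (pP * X * pQ)ᴴ 1).PosSemidef := by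
        rw [← hsum]
        exact hN.add (posSemidef_fromBlocks_diag hRPpsd hRQpsd)
      have := (Matrix.PosDef.fromBlocks₁₁ (pP * X * pQ) 1 Matrix.PosDef.one).mp hblk
      rw [IsContraction]
      simpa using this
    · -- X = sqrt P * U * sqrt Q
      calc X = piP * X * piQ := by rw [hpiPX, hXpiQ]
        _ = psqrt P * (pP * X * pQ) * psqrt Q := by
            rw [← sPpP, ← pQsQ]; noncomm_ring
  · rintro ⟨U, hU, rfl⟩
    have hblk : (Matrix.fromBlocks 1 U Uᴴ 1).PosSemidef := by
      refine (Matrix.PosDef.fromBlocks₁₁ U 1 Matrix.PosDef.one).mpr ?_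
      simpa [IsContraction] using hU
    have key : (Matrix.fromBlocks (psqrt P) (0 : Matrix (Fin d) (Fin d) ℂ) 0 (psqrt Q))ᴴ *
        (Matrix.fromBlocks 1 U Uᴴ 1) * (Matrix.fromBlocks (psqrt P) 0 0 (psqrt Q))
        = Matrix.fromBlocks P (psqrt P * U * psqrt Q) (psqrt P * U * psqrt Q)ᴴ Q := by
      rw [Matrix.fromBlocks_conjTranspose, hsPH, hsQH, Matrix.fromBlocks_multiply,
        Matrix.fromBlocks_multiply]
      have h1 : psqrt P * psqrt P = P := by
        rw [psqrt, dif_pos hP]; 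
          open scoped MatrixOrder Matrix.Norms.L2Operator in
          exact CFC.sqrt_mul_sqrt_self P hP.nonneg
      have h2 : psqrt Q * psqrt Q = Q := by
        rw [psqrt, dif_pos hQ]; 
          open scoped MatrixOrder Matrix.Norms.L2Operator in
          exact CFC.sqrt_mul_sqrt_self Q hQ.nonneg
      have h3 : (psqrt P * U * psqrt Q)ᴴ = psqrt Q * Uᴴ * psqrt P := by
        rw [Matrix.conjTranspose_mul, Matrix.conjTranspose_mul, hsPH, hsQH]
        noncomm_ring
      rw [h3]
      simp only [Matrix.conjTranspose_zero, Matrix.mul_one, Matrix.one_mul, Matrix.mul_zero, Matrix.zero_mul,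
        add_zero, zero_add, h1, h2]
    rw [← key]
    exact hblk.conjTranspose_mul_mul_same _
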